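/- Let A, B : ℝ → ℝ be C² with A″ − A² = c, B″ + B² = −c, (1/2)(A′)² − (1/3)A³ − cA = a and (1/2)(B′)² + (1/3)B³ + cB = b for constants a, b, c, and suppose A(t) + B(s) ≠ 0 for all s, t and the identity (A″(t) − B″(s))(A(t) + B(s)) − (A′(t)² − B′(s)²) = (A(t)+B(s))³/3 holds for all s, t. Then a = b. -/
import Mathlib

theorem stmt18 (A B : ℝ → ℝ) (hA : ContDiff ℝ 2 A) (hB : ContDiff ℝ 2 B)
    (a b c : ℝ)
    (hA2 : ∀ t : ℝ, deriv (deriv A) t - A t ^ 2 = c)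
    (hB2 : ∀ s : ℝ, deriv (deriv B) s + B s ^ 2 = -c)
    (hAa : ∀ t : ℝ, (1 / 2) * (deriv A t) ^ 2 - (1 / 3) * A t ^ 3 - c * A t = a)
    (hBb : ∀ s : ℝ, (1 / 2) * (deriv B s) ^ 2 + (1 / 3) * B s ^ 3 + c * B s = b)
    (hne : ∀ s t : ℝ, A t + B s ≠ 0)
    (h10 : ∀ s t : ℝ,
      (deriv (deriv A) t - deriv (deriv B) s) * (A t + B s)
        - ((deriv A t) ^ 2 - (deriv B s) ^ 2) = (A t + B s) ^ 3 / 3) :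
    a = b := by
  have h1 := hA2 0
  have h2 := hB2 0
  have h3 := hAa 0
  have h4 := hBb 0
  have h5 := h10 0 0
  linear_combination ((A 0 + B 0)/2) * h1 - ((A 0 + B 0)/2) * h2 - h3 + h4 - (1/2) * h5
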